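/- Suppose b > d (so that x̄ = 0 is not a stable equilibrium of the uncontrolled replicator equation). Let φ : ℝ → ℝ be continuously differentiable, let (γ₁, γ₂) be any of (1,0), (0,1), (−1,0), (0,−1), and let (x, g) be a solution of the controlled replicator equation with x(0) ∈ (0,1) and g(0) > 0. If g(t) → 0 as t → ∞, then x(t) does not converge to 0 as t → ∞. -/

import Mathlib

/-- `(x, g)` is a solution of the controlled replicator equation
`ẋ = x(1−x)((a+d−b−c)x + b − d + γ₁ g x + γ₂ g (1−x))`, `ġ = φ(x) g` on `[0,∞)`. -/
def IsControlledSolution (a b c d γ₁ γ₂ : ℝ) (φ : ℝ → ℝ) (x g : ℝ → ℝ) : Prop :=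
  ∀ t : ℝ, 0 ≤ t →
    HasDerivAt x
      (x t * (1 - x t) *
        ((a + d - b - c) * x t + (b - d) + γ₁ * g t * x t + γ₂ * g t * (1 - x t))) t ∧
    HasDerivAt g (φ (x t) * g t) t

open Set intervalIntegral MeasureTheory in
/-- Solutions of a scalar linear ODE with continuous coefficient stay positive. -/
lemma ode_pos (x h : ℝ → ℝ) (hx : ∀ t, 0 ≤ t → HasDerivAt x (h t * x t) t)
    (hc : ∀ t, 0 ≤ t → ContinuousAt h t) (h0 : 0 < x 0) : ∀ t, 0 ≤ t → 0 < x t := by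
  intro t ht
  have hcont : ContinuousOn h (Ici 0) := fun s hs => (hc s hs).continuousWithinAt
  set H : ℝ → ℝ := fun s => ∫ u in (0:ℝ)..s, h u with hHdef
  have hInt : ∀ s, 0 ≤ s → IntervalIntegrable h volume 0 s := fun s hs =>
    (hcont.mono (by rw [Set.uIcc_of_le hs]; exact Icc_subset_Ici_self)).intervalIntegrable
  have hmeas : ∀ s : ℝ, 0 ≤ s → StronglyMeasurableAtFilter h (nhdsWithin s (Ioi s)) := by
    intro s hs
    refine ⟨Ici 0, ?_, hcont.aestronglyMeasurable measurableSet_Ici⟩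
    exact Filter.mem_of_superset self_mem_nhdsWithin
      (fun u hu => le_of_lt (lt_of_le_of_lt hs hu))
  have hHd : ∀ s, 0 ≤ s → HasDerivWithinAt H (h s) (Ici s) s := by
    intro s hs
    exact intervalIntegral.integral_hasDerivWithinAt_right (hInt s hs) (hmeas s hs)
      ((hc s hs).continuousWithinAt)
  have hHcont : ContinuousOn H (Icc 0 t) := by
    have := intervalIntegral.continuousOn_primitive_interval' (μ := volume) (hInt t ht)
      left_mem_uIcc
    rwa [Set.uIcc_of_le ht] at this
  set F : ℝ → ℝ := fun s => x s * Real.exp (-H s) with hFdef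
  have hFcont : ContinuousOn F (Icc 0 t) := by
    refine ContinuousOn.mul (fun s hs => ((hx s hs.1).continuousAt).continuousWithinAt) ?_
    exact (Real.continuous_exp.comp_continuousOn hHcont.neg)
  have hFderiv : ∀ s ∈ Ico 0 t, HasDerivWithinAt F 0 (Ici s) s := by
    intro s hs
    have h1 : HasDerivWithinAt x (h s * x s) (Ici s) s := (hx s hs.1).hasDerivWithinAt
    have h2 : HasDerivWithinAt (fun u => Real.exp (-H u))
        (Real.exp (-H s) * -(h s)) (Ici s) s := ((hHd s hs.1).neg).exp
    have : HasDerivWithinAt (fun u => x u * Real.exp (-H u))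
        (h s * x s * Real.exp (-H s) + x s * (Real.exp (-H s) * -(h s))) (Ici s) s :=
      h1.fun_mul h2
    convert this using 1
    ring
  have hconst := constant_of_has_deriv_right_zero hFcont hFderiv t (right_mem_Icc.2 ht)
  have hF0 : F 0 = x 0 := by
    simp [hFdef, hHdef, intervalIntegral.integral_same]
  rw [hF0] at hconst
  have h1 : 0 < x t * Real.exp (-H t) := by show 0 < F t; rw [hconst]; exact h0
  rcases mul_pos_iff.mp h1 with ⟨h2, _⟩ | ⟨_, h3⟩
  · exact h2
  · linarith [Real.exp_pos (-H t)]

/-- If `b > d` (so `x̄ = 0` is not a stable equilibrium of the uncontrolled replicator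
equation), then no adaptive-gain controller whose gain vanishes asymptotically can steer
the state to `0`. -/
theorem no_vanishing_gain_consensus (a b c d γ₁ γ₂ : ℝ) (hbd : b > d) (φ : ℝ → ℝ)
    (hφ : ContDiff ℝ 1 φ)
    (hγ : (γ₁, γ₂) = (1, 0) ∨ (γ₁, γ₂) = (0, 1) ∨ (γ₁, γ₂) = (-1, 0) ∨ (γ₁, γ₂) = (0, -1))
    (x g : ℝ → ℝ) (hsol : IsControlledSolution a b c d γ₁ γ₂ φ x g)
    (hx0 : x 0 ∈ Set.Ioo (0 : ℝ) 1) (hg0 : 0 < g 0)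
    (hgain : Filter.Tendsto g Filter.atTop (nhds 0)) :
    ¬ Filter.Tendsto x Filter.atTop (nhds 0) := by
  intro hx
  have hγb : |γ₁| ≤ 1 ∧ |γ₂| ≤ 1 := by
    rcases hγ with h | h | h | h <;>
      (rw [Prod.mk.injEq] at h; obtain ⟨h1, h2⟩ := h; subst h1; subst h2; norm_num)
  obtain ⟨hγ1, hγ2⟩ := hγb
  obtain ⟨hx0p, hx0l⟩ := hx0
  set hfun : ℝ → ℝ := fun s => (1 - x s) *
      ((a + d - b - c) * x s + (b - d) + γ₁ * g s * x s + γ₂ * g s * (1 - x s)) with hfdef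
  have hxc : ∀ t, 0 ≤ t → ContinuousAt x t := fun t ht => ((hsol t ht).1).continuousAt
  have hgc : ∀ t, 0 ≤ t → ContinuousAt g t := fun t ht => ((hsol t ht).2).continuousAt
  have hder : ∀ t, 0 ≤ t → HasDerivAt x (hfun t * x t) t := by
    intro t ht
    have := (hsol t ht).1
    convert this using 1
    simp only [hfdef]
    ring
  have hhc : ∀ t, 0 ≤ t → ContinuousAt hfun t := by
    intro t ht
    have h1 := hxc t ht
    have h2 := hgc t ht
    exact (continuousAt_const.sub h1).mul
      ((((continuousAt_const.mul h1).add continuousAt_const).add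
        ((continuousAt_const.mul h2).mul h1)).add
        ((continuousAt_const.mul h2).mul (continuousAt_const.sub h1)))
  have xpos : ∀ t, 0 ≤ t → 0 < x t := ode_pos x hfun hder hhc hx0p
  set e := b - d with hedef
  have he : 0 < e := sub_pos.2 hbd
  set M := |a + d - b - c| with hMdef
  have hM0 : 0 ≤ M := abs_nonneg _
  set ε := min (1 / 2) (e / (4 * (M + 1))) with hεdef
  have hεpos : 0 < ε := lt_min (by norm_num) (by positivity)
  have hεhalf : ε ≤ 1 / 2 := min_le_left _ _
  set δ := e / 8 with hδdef
  have hδpos : 0 < δ := by positivity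
  obtain ⟨T₁, hT₁⟩ := Metric.tendsto_atTop.mp hx ε hεpos
  obtain ⟨T₂, hT₂⟩ := Metric.tendsto_atTop.mp hgain δ hδpos
  set T := max 0 (max T₁ T₂) with hTdef
  have hT0 : (0 : ℝ) ≤ T := le_max_left _ _
  have hdpos : ∀ s ∈ interior (Set.Ici T), 0 < deriv x s := by
    rw [interior_Ici]
    intro s hs
    have hs0 : 0 ≤ s := le_trans hT0 hs.le
    have hsT1 : T₁ ≤ s := le_trans (le_trans (le_max_left _ _) (le_max_right 0 _)) hs.le
    have hsT2 : T₂ ≤ s := le_trans (le_trans (le_max_right _ _) (le_max_right 0 _)) hs.le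
    have hxs : 0 < x s := xpos s hs0
    have hxε : x s < ε := by
      have := hT₁ s hsT1
      rw [Real.dist_0_eq_abs, abs_of_pos hxs] at this
      exact this
    have hgs : |g s| < δ := by
      have := hT₂ s hsT2
      rwa [Real.dist_0_eq_abs] at this
    have hxhalf : x s < 1 / 2 := lt_of_lt_of_le hxε hεhalf
    have hxabs1 : |x s| ≤ 1 := by rw [abs_of_pos hxs]; linarith
    have h1xabs : |1 - x s| ≤ 1 := by rw [abs_of_pos (by linarith)]; linarith
    have e0 : |(a + d - b - c) * x s| ≤ e / 4 := by
      rw [abs_mul]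
      have h' : |x s| ≤ e / (4 * (M + 1)) := by
        rw [abs_of_pos hxs]; exact le_trans hxε.le (min_le_right _ _)
      calc M * |x s| ≤ M * (e / (4 * (M + 1))) := mul_le_mul_of_nonneg_left h' hM0
        _ = M * e / (4 * (M + 1)) := by ring
        _ ≤ e / 4 := by
            rw [div_le_div_iff₀ (by positivity) (by norm_num)]
            nlinarith
    have e1 : |γ₁ * g s * x s| ≤ δ := by
      rw [abs_mul, abs_mul]
      calc |γ₁| * |g s| * |x s| ≤ 1 * δ * 1 := by
            exact mul_le_mul (mul_le_mul hγ1 hgs.le (abs_nonneg _) (by linarith)) hxabs1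
              (abs_nonneg _) (by linarith)
        _ = δ := by ring
    have e2 : |γ₂ * g s * (1 - x s)| ≤ δ := by
      rw [abs_mul, abs_mul]
      calc |γ₂| * |g s| * |1 - x s| ≤ 1 * δ * 1 := by
            exact mul_le_mul (mul_le_mul hγ2 hgs.le (abs_nonneg _) (by linarith)) h1xabs
              (abs_nonneg _) (by linarith)
        _ = δ := by ring
    have hD : 0 < (a + d - b - c) * x s + (b - d) + γ₁ * g s * x s + γ₂ * g s * (1 - x s) := by
      obtain ⟨l0, _⟩ := abs_le.mp e0
      obtain ⟨l1, _⟩ := abs_le.mp e1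
      obtain ⟨l2, _⟩ := abs_le.mp e2
      have : e / 8 = δ := rfl
      have hee : b - d = e := rfl
      linarith
    have hd := (hsol s hs0).1
    rw [hd.deriv]
    exact mul_pos (mul_pos hxs (by linarith)) hD
  have hmono : StrictMonoOn x (Set.Ici T) :=
    strictMonoOn_of_deriv_pos (convex_Ici T)
      (fun s hs => (hxc s (le_trans hT0 hs)).continuousWithinAt) hdpos
  have hT1pos : (0 : ℝ) ≤ T + 1 := by linarith
  have hc0 : 0 < x (T + 1) := xpos _ hT1pos
  obtain ⟨N, hN⟩ := Metric.tendsto_atTop.mp hx (x (T + 1)) hc0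
  set t0 := max N (T + 2) with ht0def
  have ht0N : N ≤ t0 := le_max_left _ _
  have ht0T : T + 2 ≤ t0 := le_max_right _ _
  have h1 : |x t0| < x (T + 1) := by
    have := hN t0 ht0N
    rwa [Real.dist_0_eq_abs] at this
  have h2 : x (T + 1) < x t0 :=
    hmono (by simp only [Set.mem_Ici]; linarith) (by simp only [Set.mem_Ici]; linarith) (by linarith)
  have h3 : 0 < x t0 := xpos t0 (by linarith)
  rw [abs_of_pos h3] at h1
  linarith
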